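/- Let (X, τ) be a Hausdorff topological vector space, C ⊆ X a nonempty compact convex subset, f : C → C a continuous map, u₁,...,uₘ : X → ℝ continuous originally m-quasiconvex functionals, and δ > 0. If max₁≤k≤m |u_k(x - f(x))| ≥ δ for every x ∈ C, then the set-valued map F(x) = {z ∈ C : max₁≤k≤m |u_k(x - f(z))| ≥ δ} is a KKM map with nonempty closed values; i.e., for any x₁,...,xₙ ∈ C, conv{x₁,...,xₙ} ⊆ ⋃ᵢ F(xᵢ). -/

import Mathlib

theorem stmt_17 {X : Type*} [AddCommGroup X] [Module ℝ X] [TopologicalSpace X]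
    [IsTopologicalAddGroup X] [ContinuousSMul ℝ X] [T2Space X]
    (C : Set X) (hCne : C.Nonempty) (hCcp : IsCompact C) (hCcv : Convex ℝ C)
    (f : X → X) (hf : ContinuousOn f C) (hfC : Set.MapsTo f C C)
    (m : ℕ) (hm : 0 < m) (u : Fin m → X → ℝ)
    (hu_cont : ∀ k, Continuous (u k))
    (hu_orig : ∀ k, u k 0 = 0)
    (hu_mq : ∀ k, ∀ y₁ y₂ : X, ∀ α : ℝ, 0 ≤ α → α ≤ 1 →
      |u k (α • y₁ + (1 - α) • y₂)| ≤ max |u k y₁| |u k y₂|)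
    (δ : ℝ) (hδ : 0 < δ)
    (hbig : ∀ x ∈ C,
      δ ≤ Finset.univ.sup' (Finset.univ_nonempty_iff.mpr (Fin.pos_iff_nonempty.mp hm))
            (fun k => |u k (x - f x)|)) :
    (∀ x ∈ C,
      ({z ∈ C | δ ≤ Finset.univ.sup'
          (Finset.univ_nonempty_iff.mpr (Fin.pos_iff_nonempty.mp hm))
          (fun k => |u k (x - f z)|)} : Set X).Nonempty ∧
      IsClosed {z ∈ C | δ ≤ Finset.univ.sup'
          (Finset.univ_nonempty_iff.mpr (Fin.pos_iff_nonempty.mp hm))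
          (fun k => |u k (x - f z)|)}) ∧
    (∀ (n : ℕ) (x : Fin n → X), (∀ i, x i ∈ C) →
      convexHull ℝ (Set.range x) ⊆
        ⋃ i, {z ∈ C | δ ≤ Finset.univ.sup'
          (Finset.univ_nonempty_iff.mpr (Fin.pos_iff_nonempty.mp hm))
          (fun k => |u k (x i - f z)|)}) := by
  have hne : (Finset.univ : Finset (Fin m)).Nonempty :=
    Finset.univ_nonempty_iff.mpr (Fin.pos_iff_nonempty.mp hm)
  constructor
  · intro x hx
    constructor
    · exact ⟨x, hx, hbig x hx⟩
    · have : {z ∈ C | δ ≤ Finset.univ.sup' hne (fun k => |u k (x - f z)|)} =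
          ⋃ k : Fin m, C ∩ (fun z => |u k (x - f z)|) ⁻¹' Set.Ici δ := by
        ext z
        simp only [Set.mem_setOf_eq, Set.mem_iUnion, Set.mem_inter_iff, Set.mem_preimage,
          Set.mem_Ici, Finset.le_sup'_iff hne, Finset.mem_univ, true_and]
        tauto
      rw [this]
      apply isClosed_iUnion_of_finite
      intro k
      apply ContinuousOn.preimage_isClosed_of_isClosed _ hCcp.isClosed isClosed_Ici
      exact (((hu_cont k).comp (continuous_const.sub continuous_id)).comp_continuousOn hf).abs
  · intro n x hx z hz
    have hzC : z ∈ C := by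
      have : convexHull ℝ (Set.range x) ⊆ C :=
        convexHull_min (Set.range_subset_iff.mpr hx) hCcv
      exact this hz
    by_contra hcon
    simp only [Set.mem_iUnion, not_exists, Set.mem_setOf_eq, not_and, not_le] at hcon
    -- define the convex set T
    set T : Set X := {w | ∀ k, |u k (w - f z)| < δ} with hT
    have hTconv : Convex ℝ T := by
      intro w₁ hw₁ w₂ hw₂ a b ha hb hab k
      have hb' : b = 1 - a := by linarith
      have := hu_mq k (w₁ - f z) (w₂ - f z) a ha (by linarith)
      have heq : a • (w₁ - f z) + (1 - a) • (w₂ - f z) = (a • w₁ + b • w₂) - f z := by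
        rw [hb']; module
      rw [heq] at this
      exact lt_of_le_of_lt this (max_lt (hw₁ k) (hw₂ k))
    have hxT : ∀ i, x i ∈ T := by
      intro i k
      have := hcon i hzC
      exact lt_of_le_of_lt (Finset.le_sup' (fun k => |u k (x i - f z)|) (Finset.mem_univ k)) this
    have hzT : z ∈ T :=
      convexHull_min (Set.range_subset_iff.mpr hxT) hTconv hz
    have := hbig z hzC
    have hlt : Finset.univ.sup' hne (fun k => |u k (z - f z)|) < δ :=
      (Finset.sup'_lt_iff hne).mpr (fun k _ => hzT k)
    exact absurd this (not_le.mpr hlt)
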